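/- (Fragmentation invariance of the Kyle model.) Let Σ be an n×n real symmetric positive semidefinite matrix and Ω an n×n real symmetric positive definite matrix. Then ker Σ ⊆ ker Λ_kyle(Σ,Ω): for every v ∈ ℝⁿ with Σv = 0 one has Λ_kyle(Σ,Ω) v = 0 and vᵀ Λ_kyle(Σ,Ω) = 0. Equivalently, for every linear subspace V ⊆ ker Σ, Π_V Λ_kyle(Σ,Ω) = 0 and Λ_kyle(Σ,Ω) Π_V = 0, i.e. zero-volatility directions induce no impact under the Kyle model. -/

import Mathlib

open Matrix
open scoped Classical

/-- `sqrtm A` is the unique symmetric positive semidefinite square root of a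
symmetric positive semidefinite real matrix `A` (junk value `0` otherwise). -/
noncomputable def sqrtm {n : ℕ} (A : Matrix (Fin n) (Fin n) ℝ) : Matrix (Fin n) (Fin n) ℝ :=
  if h : A.PosSemidef then
    (h.1.eigenvectorUnitary : Matrix (Fin n) (Fin n) ℝ) *
      diagonal ((↑) ∘ (Real.sqrt ∘ h.1.eigenvalues)) *
      (star h.1.eigenvectorUnitary : Matrix (Fin n) (Fin n) ℝ) else 0

/-- The Kyle cross-impact matrix `Λ_kyle(Σ,Ω) = (√Ω)⁻¹ √(√Ω Σ √Ω) (√Ω)⁻¹`. -/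
noncomputable def kyle {n : ℕ} (S W : Matrix (Fin n) (Fin n) ℝ) : Matrix (Fin n) (Fin n) ℝ :=
  (sqrtm W)⁻¹ * sqrtm (sqrtm W * S * sqrtm W) * (sqrtm W)⁻¹

/-- The matrix of the orthogonal projection of `ℝⁿ` (with the standard inner product)
onto the linear subspace `V`. -/
noncomputable def projMat {n : ℕ} (V : Submodule ℝ (EuclideanSpace ℝ (Fin n))) :
    Matrix (Fin n) (Fin n) ℝ :=
  LinearMap.toMatrix' ((EuclideanSpace.equiv (Fin n) ℝ).toLinearMap ∘ₗ V.subtype ∘ₗ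
    (V.orthogonalProjectionOnto).toLinearMap ∘ₗ ((EuclideanSpace.equiv (Fin n) ℝ).symm.toLinearMap))

/-- The regularizing matrix `Π̄_V + ε Π_V`. -/
noncomputable def reg {n : ℕ} (V : Submodule ℝ (EuclideanSpace ℝ (Fin n))) (ε : ℝ) :
    Matrix (Fin n) (Fin n) ℝ :=
  (1 - projMat V) + ε • projMat V

noncomputable def Matrix.PosSemidef.sqrt {n : ℕ} {A : Matrix (Fin n) (Fin n) ℝ}
    (h : A.PosSemidef) : Matrix (Fin n) (Fin n) ℝ :=
  (h.1.eigenvectorUnitary : Matrix (Fin n) (Fin n) ℝ) *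
    diagonal ((↑) ∘ (Real.sqrt ∘ h.1.eigenvalues)) *
    (star h.1.eigenvectorUnitary : Matrix (Fin n) (Fin n) ℝ)

lemma Matrix.PosSemidef.sqrt_mul_self {n : ℕ} {A : Matrix (Fin n) (Fin n) ℝ}
    (h : A.PosSemidef) : h.sqrt * h.sqrt = A := by
  have hU : (star h.1.eigenvectorUnitary : Matrix (Fin n) (Fin n) ℝ) *
      (h.1.eigenvectorUnitary : Matrix (Fin n) (Fin n) ℝ) = 1 :=
    Unitary.star_mul_self_of_mem (SetLike.coe_mem _)
  have hd : diagonal ((↑) ∘ (Real.sqrt ∘ h.1.eigenvalues)) *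
      diagonal ((↑) ∘ (Real.sqrt ∘ h.1.eigenvalues)) =
      diagonal (RCLike.ofReal ∘ h.1.eigenvalues : Fin n → ℝ) := by
    rw [diagonal_mul_diagonal]
    congr 1
    funext i
    simp [Real.mul_self_sqrt (h.eigenvalues_nonneg i)]
  conv_rhs => rw [h.1.spectral_theorem, Unitary.conjStarAlgAut_apply]
  simp only [Matrix.PosSemidef.sqrt]
  rw [show ∀ a b c d e f : Matrix (Fin n) (Fin n) ℝ, a * b * c * (d * e * f) = a * b * (c * d) * e * f
    from fun a b c d e f => by simp only [Matrix.mul_assoc], hU, Matrix.mul_one,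
    Matrix.mul_assoc _ _ (diagonal _), hd]

lemma Matrix.PosSemidef.posSemidef_sqrt {n : ℕ} {A : Matrix (Fin n) (Fin n) ℝ}
    (h : A.PosSemidef) : h.sqrt.PosSemidef := by
  have hD : (diagonal ((↑) ∘ (Real.sqrt ∘ h.1.eigenvalues)) :
      Matrix (Fin n) (Fin n) ℝ).PosSemidef := by
    rw [posSemidef_diagonal_iff]
    intro i
    exact Real.sqrt_nonneg _
  have := hD.mul_mul_conjTranspose_same (h.1.eigenvectorUnitary : Matrix (Fin n) (Fin n) ℝ)
  simpa [Matrix.PosSemidef.sqrt, star_eq_conjTranspose] using this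


lemma sqrt_mulVec_eq_zero {n : ℕ} {A : Matrix (Fin n) (Fin n) ℝ} (hA : A.PosSemidef)
    {x : Fin n → ℝ} (h : A *ᵥ x = 0) : hA.sqrt *ᵥ x = 0 := by
  have hsq : hA.sqrt *ᵥ (hA.sqrt *ᵥ x) = 0 := by
    rw [mulVec_mulVec, hA.sqrt_mul_self, h]
  have key : star (hA.sqrt *ᵥ x) ⬝ᵥ (hA.sqrt *ᵥ x) = 0 := by
    rw [star_mulVec, ← dotProduct_mulVec, hA.posSemidef_sqrt.isHermitian.eq, hsq,
      dotProduct_zero]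
  exact dotProduct_star_self_eq_zero.mp key

lemma matrix_eq_zero_of_mulVec {n : ℕ} (M : Matrix (Fin n) (Fin n) ℝ)
    (h : ∀ x, M *ᵥ x = 0) : M = 0 := by
  ext i j
  have := congrFun (h (Pi.single j 1)) i
  simpa [Matrix.mulVec_single] using this

lemma projMat_mulVec {n : ℕ} (V : Submodule ℝ (EuclideanSpace ℝ (Fin n))) (x : Fin n → ℝ) :
    projMat V *ᵥ x = (EuclideanSpace.equiv (Fin n) ℝ)
      ((V.orthogonalProjectionOnto ((EuclideanSpace.equiv (Fin n) ℝ).symm x) : EuclideanSpace ℝ (Fin n))) := by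
  rw [projMat, ← Matrix.toLin'_apply, Matrix.toLin'_toMatrix']
  simp

lemma projMat_isHermitian {n : ℕ} (V : Submodule ℝ (EuclideanSpace ℝ (Fin n))) :
    (projMat V).IsHermitian := by
  rw [Matrix.isHermitian_iff_isSymmetric]
  have hsym := Submodule.starProjection_isSymmetric V
  have heq : (projMat V).toEuclideanLin
      = (V.subtypeL ∘L V.orthogonalProjectionOnto : EuclideanSpace ℝ (Fin n) →L[ℝ] _) := by
    apply LinearMap.ext
    intro v
    rw [Matrix.toEuclideanLin_apply]
    rw [projMat_mulVec]
    simp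
    rfl
  rw [heq]
  exact hsym

lemma projMat_transpose {n : ℕ} (V : Submodule ℝ (EuclideanSpace ℝ (Fin n))) :
    (projMat V)ᵀ = projMat V := by
  have := (projMat_isHermitian V).eq
  rwa [Matrix.conjTranspose_eq_transpose_of_trivial] at this

/-- fragmentation invariance of the Kyle model: zero-volatility directions
induce no impact. -/
theorem kyle_fragmentation_invariant {n : ℕ}
    (S W : Matrix (Fin n) (Fin n) ℝ) (hS : S.PosSemidef) (hW : W.PosDef) :
    (∀ v : Fin n → ℝ, S.mulVec v = 0 →
      (kyle S W).mulVec v = 0 ∧ v ᵥ* kyle S W = 0) ∧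
    (∀ V : Submodule ℝ (EuclideanSpace ℝ (Fin n)),
      (∀ v ∈ V, S.mulVec (EuclideanSpace.equiv (Fin n) ℝ v) = 0) →
      projMat V * kyle S W = 0 ∧ kyle S W * projMat V = 0) := by
  have hWsd := hW.posSemidef
  have hBeq : sqrtm W = hWsd.sqrt := by rw [sqrtm, dif_pos hWsd]; rfl
  have hB : (sqrtm W).PosSemidef := by rw [hBeq]; exact hWsd.posSemidef_sqrt
  have hBH : (sqrtm W)ᴴ = sqrtm W := hB.isHermitian
  have hBT : (sqrtm W)ᵀ = sqrtm W := by
    rwa [Matrix.conjTranspose_eq_transpose_of_trivial] at hBH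
  have hBB : sqrtm W * sqrtm W = W := by rw [hBeq]; exact hWsd.sqrt_mul_self
  have hBunit : IsUnit (sqrtm W).det := by
    have h1 : IsUnit ((sqrtm W).det * (sqrtm W).det) := by
      rw [← Matrix.det_mul, hBB]
      exact isUnit_iff_ne_zero.mpr hW.det_pos.ne'
    exact isUnit_of_mul_isUnit_left h1
  have hBinv : sqrtm W * (sqrtm W)⁻¹ = 1 := Matrix.mul_nonsing_inv _ hBunit
  have hBinvT : ((sqrtm W)⁻¹)ᵀ = (sqrtm W)⁻¹ := by
    have h := Matrix.transpose_nonsing_inv (sqrtm W)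
    rwa [hBT] at h
  have hM : (sqrtm W * S * sqrtm W).PosSemidef := by
    have h := hS.mul_mul_conjTranspose_same (sqrtm W)
    rwa [hBH] at h
  have hRdef : sqrtm (sqrtm W * S * sqrtm W) = hM.sqrt := by rw [sqrtm, dif_pos hM]; rfl
  have hRT : hM.sqrtᵀ = hM.sqrt := by
    have := hM.posSemidef_sqrt.isHermitian.eq
    rwa [Matrix.conjTranspose_eq_transpose_of_trivial] at this
  have hkyle : kyle S W = (sqrtm W)⁻¹ * hM.sqrt * (sqrtm W)⁻¹ := by
    rw [kyle, hRdef]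
  have key : ∀ v : Fin n → ℝ, S *ᵥ v = 0 → kyle S W *ᵥ v = 0 := by
    intro v hv
    have hw : (sqrtm W * S * sqrtm W) *ᵥ ((sqrtm W)⁻¹ *ᵥ v) = 0 := by
      rw [mulVec_mulVec, Matrix.mul_assoc, Matrix.mul_assoc, hBinv, Matrix.mul_one,
        ← mulVec_mulVec, hv, mulVec_zero]
    have hR : hM.sqrt *ᵥ ((sqrtm W)⁻¹ *ᵥ v) = 0 := sqrt_mulVec_eq_zero hM hw
    rw [hkyle, ← mulVec_mulVec, ← mulVec_mulVec, hR, mulVec_zero]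
  have hkyleT : (kyle S W)ᵀ = kyle S W := by
    simp [hkyle, Matrix.transpose_mul, hBinvT, hRT, Matrix.mul_assoc]
  constructor
  · intro v hv
    refine ⟨key v hv, ?_⟩
    rw [← hkyleT, Matrix.vecMul_transpose]
    exact key v hv
  · intro V hV
    have hright : kyle S W * projMat V = 0 := by
      apply matrix_eq_zero_of_mulVec
      intro x
      rw [← mulVec_mulVec]
      apply key
      rw [projMat_mulVec]
      exact hV _ (SetLike.coe_mem _)
    refine ⟨?_, hright⟩
    have := congrArg Matrix.transpose hright
    rwa [Matrix.transpose_mul, hkyleT, projMat_transpose, Matrix.transpose_zero] at this
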